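/- Let r ∈ ℝ and s ∈ ℝ be such that y³ + r ≠ 0 for all y ≥ s, and let z, w be real numbers with z > 0, w > 0 and z ≠ w. Then ∫_s^∞ ψ_r(y,z)·ψ_r(y,w) dy = ( ψ_r(s,z)·∂ψ_r/∂x(s,w) − ∂ψ_r/∂x(s,z)·ψ_r(s,w) ) / (z² − w²), where ∂ψ_r/∂x denotes the partial derivative of ψ_r in its first argument. -/

import Mathlib

open MeasureTheory Filter Set

noncomputable section DGAux

namespace DGAux

/-- numerator polynomial of ψ -/
def Pp (r ζ y : ℝ) : ℝ := y ^ 3 + 3 * y ^ 2 / ζ + 3 * y / ζ ^ 2 + r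

/-- derivative of `Pp` -/
def Pd (ζ y : ℝ) : ℝ := 3 * y ^ 2 + 6 * y / ζ + 3 / ζ ^ 2

/-- denominator polynomial -/
def Qp (r y : ℝ) : ℝ := y ^ 3 + r

/-- numerator of ψ' over `Qp^2` (after removing the exponential) -/
def An (r ζ y : ℝ) : ℝ := (Pd ζ y - ζ * Pp r ζ y) * Qp r y - Pp r ζ y * (3 * y ^ 2)

/-- derivative of `An` -/
def Ad (r ζ y : ℝ) : ℝ :=
  (6 * y + 6 / ζ - ζ * Pd ζ y) * Qp r y + (Pd ζ y - ζ * Pp r ζ y) * (3 * y ^ 2)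
    - Pd ζ y * (3 * y ^ 2) - Pp r ζ y * (6 * y)

def psi0 (r ζ y : ℝ) : ℝ := Pp r ζ y / Qp r y * Real.exp (-(y * ζ))

def psiD (r ζ y : ℝ) : ℝ := An r ζ y / Qp r y ^ 2 * Real.exp (-(y * ζ))

/-- numerator of ψ'' over `Qp^3` -/
def Bn (r ζ y : ℝ) : ℝ := (Ad r ζ y - ζ * An r ζ y) * Qp r y - 6 * y ^ 2 * An r ζ y

def psiDD (r ζ y : ℝ) : ℝ := Bn r ζ y / Qp r y ^ 3 * Real.exp (-(y * ζ))

lemma hasDerivAt_Pp (r ζ y : ℝ) : HasDerivAt (fun x => Pp r ζ x) (Pd ζ y) y := by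
  have h3 : HasDerivAt (fun x : ℝ => x ^ 3) (3 * y ^ 2) y := by simpa using hasDerivAt_pow 3 y
  have h2 : HasDerivAt (fun x : ℝ => x ^ 2) (2 * y) y := by simpa using hasDerivAt_pow 2 y
  have h :=
    ((h3.add (((h2.const_mul 3).div_const ζ))).add
      (((hasDerivAt_id y).const_mul 3).div_const (ζ ^ 2))).add_const r
  refine h.congr_deriv ?_
  unfold Pd; ring

lemma hasDerivAt_Qp (r y : ℝ) : HasDerivAt (fun x => Qp r x) (3 * y ^ 2) y := by
  have h3 : HasDerivAt (fun x : ℝ => x ^ 3) (3 * y ^ 2) y := by simpa using hasDerivAt_pow 3 y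
  exact h3.add_const r

lemma hasDerivAt_Pd (ζ y : ℝ) : HasDerivAt (fun x => Pd ζ x) (6 * y + 6 / ζ) y := by
  have h2 : HasDerivAt (fun x : ℝ => x ^ 2) (2 * y) y := by simpa using hasDerivAt_pow 2 y
  have h :=
    ((h2.const_mul 3).add (((hasDerivAt_id y).const_mul 6).div_const ζ)).add_const (3 / ζ ^ 2)
  refine h.congr_deriv ?_
  ring

lemma hasDerivAt_An (r ζ y : ℝ) : HasDerivAt (fun x => An r ζ x) (Ad r ζ y) y := by
  have h2 : HasDerivAt (fun x : ℝ => 3 * x ^ 2) (3 * (2 * y)) y := by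
    simpa using (hasDerivAt_pow 2 y).const_mul 3
  have h :=
    (((hasDerivAt_Pd ζ y).sub ((hasDerivAt_Pp r ζ y).const_mul ζ)).mul (hasDerivAt_Qp r y)).sub
      ((hasDerivAt_Pp r ζ y).mul h2)
  refine h.congr_deriv ?_
  simp only [Pi.sub_apply, Pi.div_apply]
  unfold Ad; ring

lemma hasDerivAt_expNeg (ζ y : ℝ) :
    HasDerivAt (fun x => Real.exp (-(x * ζ))) (-ζ * Real.exp (-(y * ζ))) y := by
  have h : HasDerivAt (fun x : ℝ => -(x * ζ)) (-ζ) y := by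
    exact (((hasDerivAt_id y).mul_const ζ).neg).congr_deriv (by simp)
  simpa [mul_comm] using h.exp

lemma hasDerivAt_psi0 {r y : ℝ} (ζ : ℝ) (hQ : Qp r y ≠ 0) :
    HasDerivAt (fun x => psi0 r ζ x) (psiD r ζ y) y := by
  have hdiv := (hasDerivAt_Pp r ζ y).div (hasDerivAt_Qp r y) hQ
  have h := hdiv.mul (hasDerivAt_expNeg ζ y)
  refine h.congr_deriv ?_
  simp only [Pi.sub_apply, Pi.div_apply]
  unfold psiD An
  field_simp
  ring

set_option maxHeartbeats 1000000 in
lemma hasDerivAt_psiD {r y : ℝ} (ζ : ℝ) (hQ : Qp r y ≠ 0) :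
    HasDerivAt (fun x => psiD r ζ x) (psiDD r ζ y) y := by
  have hQ2 : Qp r y ^ 2 ≠ 0 := pow_ne_zero _ hQ
  have hq2 : HasDerivAt (fun x => Qp r x ^ 2) (2 * Qp r y ^ 1 * (3 * y ^ 2)) y :=
    (hasDerivAt_Qp r y).pow 2
  have hdiv := (hasDerivAt_An r ζ y).div hq2 hQ2
  have h := hdiv.mul (hasDerivAt_expNeg ζ y)
  refine h.congr_deriv ?_
  simp only [Pi.sub_apply, Pi.div_apply]
  unfold psiDD Bn
  field_simp
  ring

set_option maxHeartbeats 2000000 in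
/-- the key numerator polynomial identity -/
lemma num_id {r y : ℝ} (z w : ℝ) (hz : z ≠ 0) (hw : w ≠ 0) :
    Pp r z y * Bn r w y - Bn r z y * Pp r w y
      = (w ^ 2 - z ^ 2) * (Pp r z y * Pp r w y) * Qp r y ^ 2 := by
  unfold Bn Ad An Pd Pp Qp
  field_simp
  ring

set_option maxHeartbeats 1000000 in
/-- the key Wronskian/ODE identity -/
lemma wronskian_id {r y : ℝ} (z w : ℝ) (hz : z ≠ 0) (hw : w ≠ 0) (hQ : Qp r y ≠ 0) :
    psi0 r z y * psiDD r w y - psiDD r z y * psi0 r w y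
      = (w ^ 2 - z ^ 2) * (psi0 r z y * psi0 r w y) := by
  unfold psi0 psiDD
  field_simp
  linear_combination
    num_id z w hz hw

/-- decay predicate: `f` times any decaying exponential tends to `0`. -/
def Decay (f : ℝ → ℝ) : Prop :=
  ∀ c : ℝ, 0 < c → Tendsto (fun y => f y * Real.exp (-(c * y))) atTop (nhds 0)

lemma tendsto_expNeg (c : ℝ) (hc : 0 < c) :
    Tendsto (fun y : ℝ => Real.exp (-(c * y))) atTop (nhds 0) := by
  apply Real.tendsto_exp_atBot.comp
  have : Tendsto (fun y : ℝ => c * y) atTop atTop := tendsto_id.const_mul_atTop hc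
  exact tendsto_neg_atTop_atBot.comp this

lemma decay_pow (n : ℕ) : Decay (fun y => y ^ n) := by
  intro c hc
  have h := tendsto_rpow_mul_exp_neg_mul_atTop_nhds_zero n c hc
  apply h.congr'
  filter_upwards [eventually_gt_atTop (0 : ℝ)] with y hy
  rw [Real.rpow_natCast, neg_mul]

lemma decay_id : Decay (fun y => y) := by simpa using decay_pow 1

lemma decay_const (a : ℝ) : Decay (fun _ => a) := by
  intro c hc
  simpa using (tendsto_expNeg c hc).const_mul a

lemma Decay.add {f g : ℝ → ℝ} (hf : Decay f) (hg : Decay g) : Decay (fun y => f y + g y) := by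
  intro c hc
  have := (hf c hc).add (hg c hc)
  simpa [add_mul] using this

lemma Decay.sub {f g : ℝ → ℝ} (hf : Decay f) (hg : Decay g) : Decay (fun y => f y - g y) := by
  intro c hc
  have := (hf c hc).sub (hg c hc)
  simpa [sub_mul] using this

lemma Decay.mul {f g : ℝ → ℝ} (hf : Decay f) (hg : Decay g) : Decay (fun y => f y * g y) := by
  intro c hc
  have h2 : (0 : ℝ) < c / 2 := by linarith
  have h := (hf (c / 2) h2).mul (hg (c / 2) h2)
  rw [mul_zero] at h
  apply h.congr
  intro y
  rw [mul_mul_mul_comm, ← Real.exp_add,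
    show -(c / 2 * y) + -(c / 2 * y) = -(c * y) by ring]

lemma Decay.const_mul {f : ℝ → ℝ} (hf : Decay f) (a : ℝ) : Decay (fun y => a * f y) :=
  (decay_const a).mul hf

lemma Decay.div_const {f : ℝ → ℝ} (hf : Decay f) (a : ℝ) : Decay (fun y => f y / a) := by
  intro c hc
  have := (hf c hc).div_const a
  simpa [div_mul_eq_mul_div] using this

lemma decay_Pp (r ζ : ℝ) : Decay (fun y => Pp r ζ y) := by
  unfold Pp
  exact (((decay_pow 3).add (((decay_pow 2).const_mul 3).div_const ζ)).add
    ((decay_id.const_mul 3).div_const (ζ ^ 2))).add (decay_const r)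

lemma decay_Pd (ζ : ℝ) : Decay (fun y => Pd ζ y) := by
  unfold Pd
  exact (((decay_pow 2).const_mul 3).add ((decay_id.const_mul 6).div_const ζ)).add
    (decay_const (3 / ζ ^ 2))

lemma decay_Qp (r : ℝ) : Decay (fun y => Qp r y) := by
  unfold Qp
  exact (decay_pow 3).add (decay_const r)

lemma decay_An (r ζ : ℝ) : Decay (fun y => An r ζ y) := by
  unfold An
  exact (((decay_Pd ζ).sub ((decay_Pp r ζ).const_mul ζ)).mul (decay_Qp r)).sub
    ((decay_Pp r ζ).mul ((decay_pow 2).const_mul 3))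

lemma tendsto_Qp_atTop (r : ℝ) : Tendsto (fun y => Qp r y) atTop atTop := by
  unfold Qp
  exact tendsto_atTop_add_const_right atTop r (tendsto_pow_atTop (by norm_num))

lemma tendsto_inv_Qp_pow (r : ℝ) {k : ℕ} (hk : k ≠ 0) :
    Tendsto (fun y => (Qp r y ^ k)⁻¹) atTop (nhds 0) :=
  ((tendsto_pow_atTop hk).comp (tendsto_Qp_atTop r)).inv_tendsto_atTop

end DGAux

end DGAux

open DGAux

/-- For the Duistermaat–Grünbaum wave function
`ψ_r(x,z) = (x³ + 3x²/z + 3x/z² + r)/(x³ + r) · exp(−xz)` (real-valued for real `r`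
and real positive `z`), the kernel `K_ψ(z,w) = ∫_s^∞ ψ_r(y,z)ψ_r(y,w) dy` of the
time-band limited operator has the closed Wronskian-quotient form
`(ψ_r(s,z)∂_xψ_r(s,w) − ∂_xψ_r(s,z)ψ_r(s,w))/(z² − w²)`. -/
theorem kernel_wronskian_form_DG_wave (r s : ℝ) (hden : ∀ y : ℝ, s ≤ y → y ^ 3 + r ≠ 0)
    (z w : ℝ) (hz : 0 < z) (hw : 0 < w) (hzw : z ≠ w) :
    let ψ : ℝ → ℝ → ℝ := fun x ζ =>
      (x ^ 3 + 3 * x ^ 2 / ζ + 3 * x / ζ ^ 2 + r) / (x ^ 3 + r) * Real.exp (-(x * ζ))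
    (∫ y in Set.Ioi s, ψ y z * ψ y w) =
      (ψ s z * deriv (fun x => ψ x w) s - deriv (fun x => ψ x z) s * ψ s w) /
        (z ^ 2 - w ^ 2) := by
  intro ψ
  have hψ : ∀ x ζ, ψ x ζ = psi0 r ζ x := fun x ζ => rfl
  have hz' : z ≠ 0 := ne_of_gt hz
  have hw' : w ≠ 0 := ne_of_gt hw
  have hwz : w ^ 2 - z ^ 2 ≠ 0 := by
    intro h0; rcases hzw.lt_or_gt with h | h <;> nlinarith
  have hzw2 : z ^ 2 - w ^ 2 ≠ 0 := by
    intro h0; rcases hzw.lt_or_gt with h | h <;> nlinarith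
  have hQ : ∀ y : ℝ, s ≤ y → Qp r y ≠ 0 := fun y hy => hden y hy
  -- the antiderivative
  set F : ℝ → ℝ :=
    fun y => (psi0 r z y * psiD r w y - psiD r z y * psi0 r w y) / (w ^ 2 - z ^ 2) with hF
  have hderivF : ∀ y ∈ Ici s, HasDerivAt F (ψ y z * ψ y w) y := by
    intro y hy
    have hQy := hQ y hy
    have h :=
      (((hasDerivAt_psi0 z hQy).mul (hasDerivAt_psiD w hQy)).sub
        ((hasDerivAt_psiD z hQy).mul (hasDerivAt_psi0 w hQy))).div_const (w ^ 2 - z ^ 2)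
    refine h.congr_deriv ?_
    symm
    rw [hψ, hψ, eq_div_iff hwz]
    linear_combination -wronskian_id z w hz' hw' hQy
  -- continuity of the integrand on `[s, ∞)`
  have hcontInt : ∀ t : Set ℝ, t ⊆ Ici s → ContinuousOn (fun y => ψ y z * ψ y w) t := by
    intro t ht y hy
    have hQy := hQ y (ht hy)
    exact (((hasDerivAt_psi0 z hQy).continuousAt.mul
      (hasDerivAt_psi0 w hQy).continuousAt).continuousWithinAt)
  -- pointwise factorizations
  have hid : ∀ y : ℝ, ψ y z * ψ y w =
      (Pp r z y * Pp r w y * Real.exp (-((z + w) / 2 * y))) * (Qp r y ^ 2)⁻¹ *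
        Real.exp (-((z + w) / 2 * y)) := by
    intro y
    rw [hψ, hψ]
    unfold psi0
    rw [mul_mul_mul_comm, ← Real.exp_add,
      show -(y * z) + -(y * w) = -((z + w) / 2 * y) + -((z + w) / 2 * y) by ring,
      Real.exp_add]
    ring
  have hc : (0 : ℝ) < (z + w) / 2 := by linarith
  -- integrability
  have f'int : IntegrableOn (fun y => ψ y z * ψ y w) (Ioi s) := by
    have hT : Tendsto
        (fun y => Pp r z y * Pp r w y * Real.exp (-((z + w) / 2 * y)) * (Qp r y ^ 2)⁻¹)
        atTop (nhds 0) := by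
      have := (((decay_Pp r z).mul (decay_Pp r w)) ((z + w) / 2) hc).mul
        (tendsto_inv_Qp_pow r (two_ne_zero))
      simpa using this
    have habs : ∀ᶠ y in atTop,
        |Pp r z y * Pp r w y * Real.exp (-((z + w) / 2 * y)) * (Qp r y ^ 2)⁻¹| < 1 := by
      have := hT.abs
      rw [abs_zero] at this
      exact this.eventually_lt_const one_pos
    obtain ⟨T₀, hT₀⟩ := eventually_atTop.1 habs
    set T : ℝ := max s T₀ with hTdef
    have hsT : s ≤ T := le_max_left _ _
    have hint1 : IntegrableOn (fun y => ψ y z * ψ y w) (Ioc s T) := by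
      exact ((hcontInt (Icc s T) Icc_subset_Ici_self).integrableOn_Icc).mono_set
        Ioc_subset_Icc_self
    have hint2 : IntegrableOn (fun y => ψ y z * ψ y w) (Ioi T) := by
      apply Integrable.mono' (exp_neg_integrableOn_Ioi T hc)
      · exact (hcontInt (Ioi T) fun y hy => le_trans hsT (le_of_lt hy)).aestronglyMeasurable
          measurableSet_Ioi
      · refine (ae_restrict_iff' measurableSet_Ioi).2 (ae_of_all _ fun y hy => ?_)
        have hy' : T₀ ≤ y := le_trans (le_max_right s T₀) (le_of_lt hy)
        have hb := le_of_lt (hT₀ y hy')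
        rw [Real.norm_eq_abs, hid y, abs_mul, abs_of_pos (Real.exp_pos _)]
        calc |Pp r z y * Pp r w y * Real.exp (-((z + w) / 2 * y)) * (Qp r y ^ 2)⁻¹| *
              Real.exp (-((z + w) / 2 * y))
            ≤ 1 * Real.exp (-((z + w) / 2 * y)) := by
              exact mul_le_mul_of_nonneg_right hb (le_of_lt (Real.exp_pos _))
          _ = Real.exp (-((z + w) / 2) * y) := by rw [one_mul, neg_mul]
    have hsub : Ioi s ⊆ Ioc s T ∪ Ioi T := by
      intro y hy
      by_cases h : y ≤ T
      · exact Or.inl ⟨hy, h⟩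
      · exact Or.inr (lt_of_not_ge h)
    exact (hint1.union hint2).mono_set hsub
  -- the limit of F at infinity
  have hlim : Tendsto F atTop (nhds 0) := by
    have t1 : Tendsto (fun y => psi0 r z y * psiD r w y) atTop (nhds 0) := by
      have h := (((decay_Pp r z).mul (decay_An r w)) (z + w) (by linarith)).mul
        (tendsto_inv_Qp_pow r (three_ne_zero))
      rw [mul_zero] at h
      apply h.congr
      intro y
      unfold psi0 psiD
      rw [mul_mul_mul_comm, ← Real.exp_add,
        show -(y * z) + -(y * w) = -((z + w) * y) by ring]
      ring
    have t2 : Tendsto (fun y => psiD r z y * psi0 r w y) atTop (nhds 0) := by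
      have h := (((decay_An r z).mul (decay_Pp r w)) (z + w) (by linarith)).mul
        (tendsto_inv_Qp_pow r (three_ne_zero))
      rw [mul_zero] at h
      apply h.congr
      intro y
      unfold psi0 psiD
      rw [mul_mul_mul_comm, ← Real.exp_add,
        show -(y * z) + -(y * w) = -((z + w) * y) by ring]
      ring
    have := (t1.sub t2).div_const (w ^ 2 - z ^ 2)
    simpa using this
  have key := integral_Ioi_of_hasDerivAt_of_tendsto' hderivF f'int hlim
  rw [key]
  have hdz : deriv (fun x => ψ x z) s = psiD r z s :=
    (hasDerivAt_psi0 z (hQ s le_rfl)).deriv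
  have hdw : deriv (fun x => ψ x w) s = psiD r w s :=
    (hasDerivAt_psi0 w (hQ s le_rfl)).deriv
  rw [hdz, hdw]
  simp only [hF, hψ, zero_sub]
  field_simp
  ring
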